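/- The Laplace density is a scale mixture of Gaussians with exponential mixing: for β ∈ ℝ and γ > 0, ∫_0^∞ (1/√(2πω))·exp{-β²/(2ω)} · (γ²/2)·exp{-γ²ω/2} dω = (γ/2)·exp{-γ|β|}. -/

import Mathlib

open MeasureTheory Real Set

private lemma image_sq_Ioi : (fun u : ℝ => u^2) '' Ioi 0 = Ioi 0 := by
  ext x
  constructor
  · rintro ⟨u, hu, rfl⟩; exact pow_pos (mem_Ioi.mp hu) 2
  · intro hx; exact ⟨Real.sqrt x, Real.sqrt_pos.2 hx, Real.sq_sqrt (le_of_lt hx)⟩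

private lemma image_inv_Ioi (d : ℝ) (hd : 0 < d) : (fun u : ℝ => d / u) '' Ioi 0 = Ioi 0 := by
  ext x
  constructor
  · rintro ⟨u, hu, rfl⟩; exact div_pos hd hu
  · intro hx
    refine ⟨d / x, div_pos hd hx, ?_⟩
    field_simp

private lemma image_sub_div_Ioi (d : ℝ) (hd : 0 < d) :
    (fun u : ℝ => u - d / u) '' Ioi 0 = univ := by
  ext v
  simp only [mem_univ, iff_true]
  set s := Real.sqrt (v^2 + 4*d) with hs_def
  have hs : s^2 = v^2 + 4*d := Real.sq_sqrt (by positivity)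
  have hsv : |v| < s := by
    rw [← Real.sqrt_sq_eq_abs]
    exact Real.sqrt_lt_sqrt (by positivity) (by linarith)
  have hvabs := abs_lt.mp hsv
  have hu : 0 < (v + s)/2 := by linarith [hvabs.1]
  refine ⟨(v+s)/2, hu, ?_⟩
  have h0 : (v+s)/2 ≠ 0 := ne_of_gt hu
  have key : ((v+s)/2)^2 - v * ((v+s)/2) - d = 0 := by linear_combination hs / 4
  have hdd : d / ((v+s)/2) = (v+s)/2 - v := by
    rw [div_eq_iff h0]; linear_combination -key
  show (v+s)/2 - d/((v+s)/2) = v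
  rw [hdd]; ring

private lemma key_pos (a c : ℝ) (ha : 0 < a) (hc : 0 < c) :
    ∫ u in Ioi (0:ℝ), Real.exp (-(a*u^2 + c/u^2))
      = Real.sqrt (π/a) / 2 * Real.exp (-2*Real.sqrt (a*c)) := by
  set d := Real.sqrt (c/a) with hd_def
  have hd : 0 < d := Real.sqrt_pos.2 (div_pos hc ha)
  have hd2 : d^2 = c/a := Real.sq_sqrt (le_of_lt (div_pos hc ha))
  have had : a * d = Real.sqrt (a*c) := by
    rw [hd_def, ← Real.sqrt_sq (le_of_lt ha), ← Real.sqrt_mul (sq_nonneg a)]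
    congr 1
    field_simp
    ring
    rw [Real.sq_sqrt (sq_nonneg a)]
  have hc' : a * d^2 = c := by rw [hd2]; field_simp
  set G : ℝ → ℝ := fun u => Real.exp (-a*(u - d/u)^2) with hG_def
  -- derivatives
  have hderiv : ∀ u ∈ Ioi (0:ℝ),
      HasDerivWithinAt (fun u : ℝ => u - d/u) (1 + d/u^2) (Ioi 0) u := by
    intro u hu
    have hu0 : u ≠ 0 := ne_of_gt hu
    have h1 : HasDerivAt (fun x : ℝ => d / x) (-(d/u^2)) u := by
      simpa [div_eq_mul_inv, mul_neg] using (hasDerivAt_inv hu0).const_mul d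
    exact (by have := (hasDerivAt_id' u).sub h1; simp only [sub_neg_eq_add] at this; exact this :
      HasDerivAt (fun x : ℝ => x - d/x) (1 + d/u^2) u).hasDerivWithinAt
  have hinj : InjOn (fun u : ℝ => u - d/u) (Ioi 0) := by
    intro u hu v hv h
    simp only [mem_Ioi] at hu hv
    have hu0 : u ≠ 0 := ne_of_gt hu
    have hv0 : v ≠ 0 := ne_of_gt hv
    have h' : (u - v) * (u * v + d) = 0 := by
      field_simp at h
      nlinarith [h]
    rcases mul_eq_zero.mp h' with h'' | h''
    · linarith
    · nlinarith
  have hderiv_inv : ∀ u ∈ Ioi (0:ℝ),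
      HasDerivWithinAt (fun u : ℝ => d / u) (-(d/u^2)) (Ioi 0) u := by
    intro u hu
    have hu0 : u ≠ 0 := ne_of_gt hu
    exact (by simpa [div_eq_mul_inv, mul_neg] using (hasDerivAt_inv hu0).const_mul d :
      HasDerivAt (fun x : ℝ => d/x) (-(d/u^2)) u).hasDerivWithinAt
  have hinj_inv : InjOn (fun u : ℝ => d / u) (Ioi 0) := by
    intro u hu v hv h
    simp only [mem_Ioi] at hu hv
    have hu0 : u ≠ 0 := ne_of_gt hu
    have hv0 : v ≠ 0 := ne_of_gt hv
    field_simp at h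
    rcases h with h | h
    · rfl
  -- change of variables v = u - d/u
  have hA := integral_image_eq_integral_abs_deriv_smul measurableSet_Ioi hderiv hinj
      (fun v => Real.exp (-a * v^2))
  rw [image_sub_div_Ioi d hd, Measure.restrict_univ, integral_gaussian] at hA
  have habs : ∀ u ∈ Ioi (0:ℝ), |1 + d/u^2| • Real.exp (-a * (u - d/u)^2)
      = (1 + d/u^2) * G u := by
    intro u hu
    have h0 : (0:ℝ) ≤ d/u^2 := div_nonneg (le_of_lt hd) (sq_nonneg u)
    rw [smul_eq_mul, abs_of_pos (by linarith)]
  rw [setIntegral_congr_fun measurableSet_Ioi habs] at hA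
  -- hA : √(π/a) = ∫ u in Ioi 0, (1 + d/u^2) * G u
  -- integrability
  have hintH : IntegrableOn (fun u => |1 + d/u^2| • Real.exp (-a * (u - d/u)^2)) (Ioi 0) := by
    have h' := (integrableOn_image_iff_integrableOn_abs_deriv_smul measurableSet_Ioi hderiv hinj
      (fun v => Real.exp (-a * v^2))).mp
    apply h'
    rw [image_sub_div_Ioi d hd, integrableOn_univ]
    exact integrable_exp_neg_mul_sq ha
  have hintH' : IntegrableOn (fun u => (1 + d/u^2) * G u) (Ioi 0) :=
    hintH.congr_fun habs measurableSet_Ioi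
  have hGmeas : AEStronglyMeasurable G (volume.restrict (Ioi 0)) := by
    apply Measurable.aestronglyMeasurable
    fun_prop
  have hboundG : ∀ᵐ u ∂(volume.restrict (Ioi (0:ℝ))), ‖G u‖ ≤ (1 + d/u^2) * G u := by
    filter_upwards [ae_restrict_mem measurableSet_Ioi] with u hu
    have h0 : (0:ℝ) ≤ d/u^2 := div_nonneg (le_of_lt hd) (sq_nonneg u)
    have hGpos : 0 < G u := Real.exp_pos _
    rw [Real.norm_eq_abs, abs_of_pos hGpos]
    nlinarith
  have hintG : IntegrableOn G (Ioi 0) := hintH'.mono' hGmeas hboundG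
  have hG2meas : AEStronglyMeasurable (fun u => (d/u^2) * G u) (volume.restrict (Ioi 0)) := by
    apply Measurable.aestronglyMeasurable
    fun_prop
  have hboundG2 : ∀ᵐ u ∂(volume.restrict (Ioi (0:ℝ))),
      ‖(d/u^2) * G u‖ ≤ (1 + d/u^2) * G u := by
    filter_upwards [ae_restrict_mem measurableSet_Ioi] with u hu
    have h0 : (0:ℝ) ≤ d/u^2 := div_nonneg (le_of_lt hd) (sq_nonneg u)
    have hGpos : 0 < G u := Real.exp_pos _
    rw [Real.norm_eq_abs, abs_of_nonneg (by positivity)]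
    nlinarith
  have hintG2 : IntegrableOn (fun u => (d/u^2) * G u) (Ioi 0) := hintH'.mono' hG2meas hboundG2
  -- inversion
  have hB := integral_image_eq_integral_abs_deriv_smul measurableSet_Ioi hderiv_inv hinj_inv G
  rw [image_inv_Ioi d hd] at hB
  have hBeq : ∀ u ∈ Ioi (0:ℝ), |-(d/u^2)| • G (d/u) = (d/u^2) * G u := by
    intro u hu
    have hu0 : u ≠ 0 := ne_of_gt hu
    have h0 : (0:ℝ) ≤ d/u^2 := div_nonneg (le_of_lt hd) (sq_nonneg u)
    have hdu : d / (d / u) = u := by field_simp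
    have hGG : G (d/u) = G u := by
      show Real.exp (-a * (d/u - d/(d/u))^2) = Real.exp (-a * (u - d/u)^2)
      rw [hdu]
      congr 1
      ring
    rw [smul_eq_mul, abs_neg, abs_of_nonneg h0, hGG]
  rw [setIntegral_congr_fun measurableSet_Ioi hBeq] at hB
  -- hB : ∫ G = ∫ (d/u^2) * G
  have hadd : (∫ u in Ioi (0:ℝ), G u) + ∫ u in Ioi (0:ℝ), (d/u^2) * G u
      = ∫ u in Ioi (0:ℝ), (1 + d/u^2) * G u := by
    rw [← integral_add hintG hintG2]
    apply setIntegral_congr_fun measurableSet_Ioi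
    intro u hu
    ring
  have hGint : ∫ u in Ioi (0:ℝ), G u = Real.sqrt (π/a) / 2 := by
    rw [← hB] at hadd
    rw [← hA] at hadd
    linarith
  -- pointwise identity and conclusion
  have hpt : ∀ u ∈ Ioi (0:ℝ),
      Real.exp (-(a*u^2 + c/u^2)) = Real.exp (-2*Real.sqrt (a*c)) * G u := by
    intro u hu
    have hu0 : u ≠ 0 := ne_of_gt hu
    rw [hG_def, ← Real.exp_add]
    congr 1
    rw [← had]
    have hsq : (u - d/u)^2 = u^2 - 2*d + (d^2)/u^2 := by field_simp; ring
    rw [hsq]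
    field_simp
    nlinarith [hc']
  rw [setIntegral_congr_fun measurableSet_Ioi hpt, integral_const_mul, hGint]
  ring

private lemma key_int (a c : ℝ) (ha : 0 < a) (hc : 0 ≤ c) :
    ∫ u in Ioi (0:ℝ), Real.exp (-(a*u^2 + c/u^2))
      = Real.sqrt (π/a) / 2 * Real.exp (-2*Real.sqrt (a*c)) := by
  rcases eq_or_lt_of_le hc with hc0 | hc0
  · have h1 : ∀ u ∈ Ioi (0:ℝ), Real.exp (-(a*u^2 + c/u^2)) = Real.exp (-a*u^2) := by
      intro u hu
      rw [← hc0]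
      norm_num
    rw [setIntegral_congr_fun measurableSet_Ioi h1, integral_gaussian_Ioi, ← hc0]
    norm_num
  · exact key_pos a c ha hc0

theorem laplace_scale_mixture (β γ : ℝ) (hγ : 0 < γ) :
    ∫ ω in Ioi (0:ℝ),
        (1 / Real.sqrt (2*π*ω)) * Real.exp (-β^2 / (2*ω)) *
          ((γ^2/2) * Real.exp (-γ^2 * ω / 2))
      = (γ/2) * Real.exp (-γ * |β|) := by
  have ha : 0 < γ^2/2 := by positivity
  have hc : 0 ≤ β^2/2 := by positivity
  have hderiv : ∀ u ∈ Ioi (0:ℝ), HasDerivWithinAt (fun u : ℝ => u^2) (2*u) (Ioi 0) u := by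
    intro u hu
    exact (by simpa using hasDerivAt_pow 2 u : HasDerivAt (fun u : ℝ => u^2) (2*u) u).hasDerivWithinAt
  have hinj : InjOn (fun u : ℝ => u^2) (Ioi 0) := by
    intro u hu v hv h
    simp only [mem_Ioi] at hu hv
    simp only at h
    nlinarith
  have h1 := integral_image_eq_integral_abs_deriv_smul measurableSet_Ioi hderiv hinj
      (fun ω => (1 / Real.sqrt (2*π*ω)) * Real.exp (-β^2 / (2*ω)) *
          ((γ^2/2) * Real.exp (-γ^2 * ω / 2)))
  rw [image_sq_Ioi] at h1
  rw [h1]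
  have hs2π : (0:ℝ) < Real.sqrt (2*π) := Real.sqrt_pos.2 (by positivity)
  have hpt : ∀ u ∈ Ioi (0:ℝ),
      |2*u| • ((1 / Real.sqrt (2*π*u^2)) * Real.exp (-β^2 / (2*u^2)) *
          ((γ^2/2) * Real.exp (-γ^2 * u^2 / 2)))
      = (γ^2 / Real.sqrt (2*π)) * Real.exp (-((γ^2/2)*u^2 + (β^2/2)/u^2)) := by
    intro u hu
    have hu0 : u ≠ 0 := ne_of_gt hu
    have hsq : Real.sqrt (2*π*u^2) = Real.sqrt (2*π) * u := by
      rw [Real.sqrt_mul (by positivity), Real.sqrt_sq (le_of_lt hu)]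
    have he : Real.exp (-β^2 / (2*u^2)) * Real.exp (-γ^2 * u^2 / 2)
        = Real.exp (-((γ^2/2)*u^2 + (β^2/2)/u^2)) := by
      rw [← Real.exp_add]
      congr 1
      ring
    have hu' : (0:ℝ) < u := hu
    rw [smul_eq_mul, ← he, abs_of_pos (by linarith : (0:ℝ) < 2*u), hsq]
    field_simp
  rw [setIntegral_congr_fun measurableSet_Ioi hpt, integral_const_mul,
    key_int _ _ ha hc]
  have h2 : Real.sqrt (π/(γ^2/2)) = Real.sqrt (2*π) / γ := by
    rw [show π/(γ^2/2) = (2*π)/γ^2 by ring, Real.sqrt_div (by positivity),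
      Real.sqrt_sq (le_of_lt hγ)]
  have h3 : Real.sqrt ((γ^2/2) * (β^2/2)) = γ * |β| / 2 := by
    rw [show (γ^2/2) * (β^2/2) = (γ*β/2)^2 by ring, Real.sqrt_sq_eq_abs, abs_div, abs_mul,
      abs_of_pos hγ]
    norm_num
  rw [h2, h3]
  have : -2 * (γ * |β| / 2) = -γ * |β| := by ring
  rw [this]
  field_simp
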